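/- arXiv:1601.06187 — 9 statements merged into one kernel-verified Lean document; each statement's English description precedes it below -/
import Mathlib

section
/- For a probability distribution p on the natural numbers with mean n_a = Σ_m m·p(m) > 0, the normalized second-order correlation g^(2) = (Σ_m m(m-1)p(m)) / n_a^2 satisfies g^(2) ≥ ⌊n_a⌋(2n_a - ⌊n_a⌋ - 1)/n_a^2. -/
/-- For a probability distribution `p` on ℕ with mean `na > 0`, the normalized
second-order correlation `g² = (∑ m(m-1)p m)/na²` satisfies
`g² ≥ ⌊na⌋(2na - ⌊na⌋ - 1)/na²`. -/
theorem stmt0 (p : ℕ → ℝ) (hp : ∀ m, 0 ≤ p m)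
    (hsum1 : ∑' m : ℕ, p m = 1)
    (h1 : Summable fun m : ℕ => (m : ℝ) * p m)
    (h2 : Summable fun m : ℕ => (m : ℝ) * ((m : ℝ) - 1) * p m)
    (na : ℝ) (hna : na = ∑' m : ℕ, (m : ℝ) * p m) (hpos : 0 < na) :
    (∑' m : ℕ, (m : ℝ) * ((m : ℝ) - 1) * p m) / na ^ 2 ≥
      (⌊na⌋ : ℝ) * (2 * na - (⌊na⌋ : ℝ) - 1) / na ^ 2 := by
  have hpsum : Summable p := by
    by_contra h
    rw [tsum_eq_zero_of_not_summable h] at hsum1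
    norm_num at hsum1
  set k : ℤ := ⌊na⌋ with hk
  have key : ∀ m : ℕ, (k : ℝ) * (2 * (m : ℝ) - (k : ℝ) - 1) * p m ≤
      (m : ℝ) * ((m : ℝ) - 1) * p m := by
    intro m
    apply mul_le_mul_of_nonneg_right _ (hp m)
    have h0 : (0 : ℤ) ≤ ((m : ℤ) - k) * ((m : ℤ) - k - 1) := by
      rcases le_or_gt (m : ℤ) k with h | h
      · nlinarith
      · have : k + 1 ≤ (m : ℤ) := h
        nlinarith
    have h0' : (0 : ℝ) ≤ ((m : ℝ) - (k : ℝ)) * ((m : ℝ) - (k : ℝ) - 1) := by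
      have : (0:ℝ) ≤ (((m : ℤ) - k) * ((m:ℤ) - k - 1) : ℤ) := by exact_mod_cast h0
      push_cast at this
      linarith [this]
    nlinarith [h0']
  have hsL : Summable fun m : ℕ => (k : ℝ) * (2 * (m : ℝ) - (k : ℝ) - 1) * p m := by
    apply Summable.congr ((h1.mul_left (2 * (k : ℝ))).add
      (hpsum.mul_left (-(k : ℝ) * ((k : ℝ) + 1))))
    intro m; ring
  have main : (k : ℝ) * (2 * na - (k : ℝ) - 1) ≤
      ∑' m : ℕ, (m : ℝ) * ((m : ℝ) - 1) * p m := by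
    calc (k : ℝ) * (2 * na - (k : ℝ) - 1)
        = ∑' m : ℕ, (2 * (k : ℝ) * ((m : ℝ) * p m) + (-(k : ℝ) * ((k : ℝ) + 1)) * p m) := by
          rw [Summable.tsum_add (h1.mul_left _) (hpsum.mul_left _), tsum_mul_left, tsum_mul_left,
            hsum1, ← hna]; ring
      _ = ∑' m : ℕ, (k : ℝ) * (2 * (m : ℝ) - (k : ℝ) - 1) * p m :=
          tsum_congr (fun m => by ring)
      _ ≤ _ := Summable.tsum_le_tsum key hsL h2
  have hna2 : (0 : ℝ) < na ^ 2 := by positivity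
  gcongr
end

section
/- For any real n_a > 0, the probability distribution supported on the two consecutive integers ⌊n_a⌋ and ⌊n_a⌋+1, with p(⌊n_a⌋) = ⌊n_a⌋ - n_a + 1 and p(⌊n_a⌋+1) = n_a - ⌊n_a⌋, has mean exactly n_a and its second-order correlation equals g^(2) = ⌊n_a⌋(2n_a - ⌊n_a⌋ - 1)/n_a^2, achieving the lower bound. -/
lemma two_point_tsum (n : ℕ) (f : ℕ → ℝ) (h : ∀ m, m ≠ n → m ≠ n + 1 → f m = 0) :
    ∑' m, f m = f n + f (n + 1) := by
  rw [tsum_eq_sum (s := ({n, n + 1} : Finset ℕ))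
    (by intro m hm; simp only [Finset.mem_insert, Finset.mem_singleton, not_or] at hm
        exact h m hm.1 hm.2)]
  rw [Finset.sum_insert (by simp)]
  simp

/-- The Fock duo supported on ⌊na⌋ and ⌊na⌋+1 with weights ⌊na⌋+1-na and na-⌊na⌋
has mean exactly `na` and second-order correlation `⌊na⌋(2na-⌊na⌋-1)/na²`. -/
theorem stmt1 (na : ℝ) (hpos : 0 < na)
    (p : ℕ → ℝ)
    (hdef : p = fun m => if m = (⌊na⌋).toNat then (⌊na⌋ : ℝ) + 1 - na
      else if m = (⌊na⌋).toNat + 1 then na - (⌊na⌋ : ℝ) else 0) :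
    (∑' m : ℕ, p m = 1) ∧
    (∑' m : ℕ, (m : ℝ) * p m = na) ∧
    (∑' m : ℕ, (m : ℝ) * ((m : ℝ) - 1) * p m) / na ^ 2 =
      (⌊na⌋ : ℝ) * (2 * na - (⌊na⌋ : ℝ) - 1) / na ^ 2 := by
  set n := (⌊na⌋).toNat with hn
  have hcast : ((n : ℕ) : ℝ) = (⌊na⌋ : ℝ) := by
    rw [hn]
    exact_mod_cast congrArg Int.cast (Int.toNat_of_nonneg (Int.floor_nonneg.mpr hpos.le))
  have hz : ∀ m, m ≠ n → m ≠ n + 1 → p m = 0 := by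
    intro m h1 h2; simp [hdef, h1, h2]
  have hpn : p n = (⌊na⌋ : ℝ) + 1 - na := by simp [hdef]
  have hpn1 : p (n + 1) = na - (⌊na⌋ : ℝ) := by simp [hdef]
  refine ⟨?_, ?_, ?_⟩
  · rw [two_point_tsum n p hz, hpn, hpn1]; ring
  · rw [two_point_tsum n (fun m => (m : ℝ) * p m) (fun m h1 h2 => by simp [hz m h1 h2])]
    simp only [hpn, hpn1, Nat.cast_add, Nat.cast_one, hcast]; ring
  · rw [two_point_tsum n (fun m => (m : ℝ) * ((m : ℝ) - 1) * p m)
      (fun m h1 h2 => by simp [hz m h1 h2])]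
    simp only [hpn, hpn1, Nat.cast_add, Nat.cast_one, hcast]; ring_nf
end

section
/- For any distribution p on ℕ with mean n_a > 0, writing G = Σ_m m(m-1)p(m) and G_* = ⌊n_a⌋(2n_a - ⌊n_a⌋ - 1), one has G - G_* = Σ_{k ∉ {0,1}} k(k-1)·p(⌊n_a⌋ + k), where the sum is over integers k ≥ -⌊n_a⌋ with k ≠ 0,1; in particular G - G_* ≥ 0, with equality iff p is supported on {⌊n_a⌋, ⌊n_a⌋+1}. -/
/-- For a distribution `p` on ℕ with mean `na > 0`, writing `G = ∑ m(m-1)p m` and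
`G* = ⌊na⌋(2na - ⌊na⌋ - 1)`, one has
`G - G* = ∑_{k∉{0,1}} k(k-1) p(⌊na⌋+k)` (reindexed over m = ⌊na⌋+k, k = m - ⌊na⌋);
in particular `G - G* ≥ 0`, with equality iff `p` is supported on `{⌊na⌋, ⌊na⌋+1}`. -/
theorem stmt2 (p : ℕ → ℝ) (hp : ∀ m, 0 ≤ p m)
    (hsum1 : ∑' m : ℕ, p m = 1)
    (h1 : Summable fun m : ℕ => (m : ℝ) * p m)
    (h2 : Summable fun m : ℕ => (m : ℝ) * ((m : ℝ) - 1) * p m)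
    (na : ℝ) (hna : na = ∑' m : ℕ, (m : ℝ) * p m) (hpos : 0 < na) :
    ((∑' m : ℕ, (m : ℝ) * ((m : ℝ) - 1) * p m) - (⌊na⌋ : ℝ) * (2 * na - (⌊na⌋ : ℝ) - 1) =
      ∑' m : ℕ, (if m = (⌊na⌋).toNat ∨ m = (⌊na⌋).toNat + 1 then 0
        else ((m : ℝ) - (⌊na⌋ : ℝ)) * ((m : ℝ) - (⌊na⌋ : ℝ) - 1) * p m)) ∧
    (0 ≤ (∑' m : ℕ, (m : ℝ) * ((m : ℝ) - 1) * p m) - (⌊na⌋ : ℝ) * (2 * na - (⌊na⌋ : ℝ) - 1)) ∧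
    ((∑' m : ℕ, (m : ℝ) * ((m : ℝ) - 1) * p m) - (⌊na⌋ : ℝ) * (2 * na - (⌊na⌋ : ℝ) - 1) = 0 ↔
      ∀ m, m ≠ (⌊na⌋).toNat → m ≠ (⌊na⌋).toNat + 1 → p m = 0) := by
  have hsp : Summable p := by
    by_contra h
    rw [tsum_eq_zero_of_not_summable h] at hsum1
    norm_num at hsum1
  set N : ℕ := (⌊na⌋).toNat with hN
  have hfl : ((⌊na⌋ : ℤ) : ℝ) = (N : ℝ) := by
    have : ((⌊na⌋).toNat : ℤ) = ⌊na⌋ := Int.toNat_of_nonneg (Int.floor_nonneg.mpr hpos.le)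
    exact_mod_cast this.symm
  set f : ℝ := (N : ℝ) with hf
  set g : ℕ → ℝ := fun m => ((m : ℝ) - f) * ((m : ℝ) - f - 1) * p m with hg
  have hgeq : ∀ m, g m = (m : ℝ) * ((m : ℝ) - 1) * p m
      - (2 * f * ((m : ℝ) * p m) - f * (f + 1) * p m) := by
    intro m; simp only [hg]; ring
  have hsg : Summable g := by
    rw [funext hgeq]
    exact h2.sub (((h1.mul_left (2 * f))).sub (hsp.mul_left (f * (f + 1))))
  have htg : ∑' m, g m = (∑' m : ℕ, (m : ℝ) * ((m : ℝ) - 1) * p m)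
      - f * (2 * na - f - 1) := by
    rw [funext hgeq, Summable.tsum_sub h2 (((h1.mul_left (2 * f))).sub (hsp.mul_left (f * (f + 1)))),
      Summable.tsum_sub ((h1.mul_left (2 * f))) (hsp.mul_left (f * (f + 1))),
      tsum_mul_left, tsum_mul_left, hsum1, ← hna]
    ring
  have hgnn : ∀ m, 0 ≤ g m := by
    intro m
    apply mul_nonneg _ (hp m)
    rcases le_or_gt (m : ℕ) N with h | h
    · have : (m : ℝ) ≤ f := by rw [hf]; exact_mod_cast h
      nlinarith
    · have : (N : ℝ) + 1 ≤ (m : ℝ) := by exact_mod_cast h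
      rw [hf] at *; nlinarith
  have key : (∑' m : ℕ, (m : ℝ) * ((m : ℝ) - 1) * p m)
      - (⌊na⌋ : ℝ) * (2 * na - (⌊na⌋ : ℝ) - 1) = ∑' m, g m := by
    rw [hfl, htg]
  have hif : ∀ m : ℕ, (if m = N ∨ m = N + 1 then (0:ℝ)
      else ((m : ℝ) - (⌊na⌋ : ℝ)) * ((m : ℝ) - (⌊na⌋ : ℝ) - 1) * p m) = g m := by
    intro m
    rcases eq_or_ne m N with rfl | h0
    · simp [hg, hf]
    rcases eq_or_ne m (N + 1) with rfl | h1'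
    · have : g (N + 1) = 0 := by simp only [hg, hf]; push_cast; ring
      simp [this]
    · simp [h0, h1', hfl, hg]
  refine ⟨by rw [key]; exact (tsum_congr hif).symm, by rw [key]; exact tsum_nonneg hgnn, ?_⟩
  rw [key]
  constructor
  · intro hz m hm0 hm1
    have hgm : g m = 0 := le_antisymm (hz ▸ Summable.le_tsum hsg m fun n _ => hgnn n) (hgnn m)
    have hc : ((m : ℝ) - f) * ((m : ℝ) - f - 1) ≠ 0 := by
      apply mul_ne_zero
      · refine sub_ne_zero.mpr fun hh => hm0 ?_
        rw [hf] at hh; exact_mod_cast hh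
      · intro hh
        apply hm1
        have : (m : ℝ) = ((N + 1 : ℕ) : ℝ) := by rw [hf] at hh; push_cast; linarith
        exact_mod_cast this
    exact (mul_eq_zero.mp hgm).resolve_left hc
  · intro hsupp
    have hg0 : ∀ m, g m = 0 := by
      intro m
      rcases eq_or_ne m N with rfl | h0
      · simp [hg, hf]
      rcases eq_or_ne m (N + 1) with rfl | h1'
      · simp only [hg, hf]; push_cast; ring
      · simp [hg, hsupp m h0 h1']
    rw [tsum_congr hg0, tsum_zero]
end

section
/- There exists a quantum state (probability distribution on Fock states) with mean photon number n_a > 1 and g^(2) < 1/2; concretely, the equal-weight Fock duo with p(1) = p(2) = 1/2 has n_a = 3/2 and g^(2) = 4/9 < 1/2. -/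
/-- The equal-weight Fock duo p(1)=p(2)=1/2 has mean 3/2 > 1 and g² = 4/9 < 1/2,
disproving the single-particle criterion. -/
theorem stmt3 :
    ∃ p : ℕ → ℝ, (∀ m, 0 ≤ p m) ∧ (∑' m : ℕ, p m = 1) ∧
      (∑' m : ℕ, (m : ℝ) * p m = 3 / 2) ∧ (1 : ℝ) < 3 / 2 ∧
      (∑' m : ℕ, (m : ℝ) * ((m : ℝ) - 1) * p m) / (3 / 2 : ℝ) ^ 2 = 4 / 9 ∧
      (4 / 9 : ℝ) < 1 / 2 ∧
      p = fun m => if m = 1 then (1 / 2 : ℝ) else if m = 2 then 1 / 2 else 0 := by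
  set p : ℕ → ℝ := fun m => if m = 1 then (1 / 2 : ℝ) else if m = 2 then 1 / 2 else 0 with hp
  have hz : ∀ b ∉ ({1, 2} : Finset ℕ), p b = 0 := by
    intro b hb
    simp only [hp]
    rw [if_neg, if_neg] <;> simp_all
  have hz1 : ∀ b ∉ ({1, 2} : Finset ℕ), (b : ℝ) * p b = 0 := by
    intro b hb; rw [hz b hb, mul_zero]
  have hz2 : ∀ b ∉ ({1, 2} : Finset ℕ), (b : ℝ) * ((b : ℝ) - 1) * p b = 0 := by
    intro b hb; rw [hz b hb, mul_zero]
  refine ⟨p, ?_, ?_, ?_, by norm_num, ?_, by norm_num, rfl⟩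
  · intro m; simp only [hp]; positivity
  · rw [tsum_eq_sum hz]; simp [hp]; norm_num
  · rw [tsum_eq_sum hz1]; simp [hp]; norm_num
  · rw [tsum_eq_sum hz2]; simp [hp]; norm_num
end

section
/- For any distribution p on ℕ with mean n_a > 0 and any integer n with 1 ≤ n ≤ ⌊n_a⌋, the n-th order correlation g^(n) = (Σ_m m!/(m-n)!·p(m))/n_a^n satisfies g^(n) ≥ (⌊n_a⌋!/((⌊n_a⌋-n)!·n_a^n))·(1 + n(n_a - ⌊n_a⌋)/(⌊n_a⌋ + 1 - n)), and this bound is attained by the Fock duo with mean n_a. -/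
/-- Falling factorial as a product over `ℝ` equals the cast of `Nat.descFactorial`. -/
lemma prod_range_sub_eq_descFactorial (m k : ℕ) :
    ∏ i ∈ Finset.range k, ((m : ℝ) - i) = (m.descFactorial k : ℝ) := by
  induction k with
  | zero => simp
  | succ k ih =>
    rw [Finset.prod_range_succ, ih, Nat.descFactorial_succ, Nat.cast_mul]
    rcases le_or_gt k m with h | h
    · rw [Nat.cast_sub h]; ring
    · simp [Nat.descFactorial_eq_zero_iff_lt.2 h]

/-- The difference of consecutive descending factorials. -/
lemma descFactorial_diff (n k : ℕ) (hn : 1 ≤ n) :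
    ((k + 1).descFactorial n : ℝ) - (k.descFactorial n : ℝ)
      = (n : ℝ) * (k.descFactorial (n - 1) : ℝ) := by
  obtain ⟨j, rfl⟩ : ∃ j, n = j + 1 := ⟨n - 1, (Nat.succ_pred_eq_of_pos hn).symm⟩
  rw [Nat.succ_descFactorial_succ, Nat.descFactorial_succ]
  rcases le_or_gt j k with h | h
  · push_cast [Nat.cast_sub h]; ring
  · simp [Nat.descFactorial_eq_zero_iff_lt.2 h]

/-- Supporting-line inequality for falling factorial (discrete convexity). -/
lemma descFactorial_line_le (n N : ℕ) (hn : 1 ≤ n) (m : ℕ) :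
    (N.descFactorial n : ℝ)
      + ((m : ℝ) - N) * (((N + 1).descFactorial n : ℝ) - (N.descFactorial n : ℝ))
      ≤ (m.descFactorial n : ℝ) := by
  set F : ℕ → ℝ := fun k => (k.descFactorial n : ℝ) with hF
  set d : ℕ → ℝ := fun k => F (k + 1) - F k with hd
  have hdval : ∀ k, d k = (n : ℝ) * (k.descFactorial (n - 1) : ℝ) := fun k =>
    descFactorial_diff n k hn
  have hdmono : ∀ a b : ℕ, a ≤ b → d a ≤ d b := by
    intro a b hab
    rw [hdval, hdval]
    have := Nat.descFactorial_le (n - 1) hab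
    exact mul_le_mul_of_nonneg_left (by exact_mod_cast this) (by positivity)
  show F N + ((m : ℝ) - N) * d N ≤ F m
  rcases le_or_gt N m with h | h
  · obtain ⟨t, rfl⟩ := Nat.exists_eq_add_of_le h
    have key : ∀ t : ℕ, F N + (t : ℝ) * d N ≤ F (N + t) := by
      intro t
      induction t with
      | zero => simp
      | succ t ih =>
        have h1 : F (N + t) + d (N + t) = F (N + t + 1) := by simp [hd]
        have h2 : d N ≤ d (N + t) := hdmono N (N + t) (Nat.le_add_right _ _)
        push_cast
        have : F N + ((t : ℝ) + 1) * d N = (F N + (t : ℝ) * d N) + d N := by ring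
        rw [this]
        show F N + ↑t * d N + d N ≤ F (N + t + 1)
        rw [← h1]
        linarith
    have := key t
    have hc : ((N + t : ℕ) : ℝ) - (N : ℝ) = (t : ℝ) := by push_cast; ring
    rw [hc]
    exact this
  · have key : ∀ t : ℕ, t ≤ N → F N - (t : ℝ) * d N ≤ F (N - t) := by
      intro t
      induction t with
      | zero => simp
      | succ t ih =>
        intro hle
        have ht : t ≤ N := Nat.le_of_succ_le hle
        have ih' := ih ht
        have hNt : N - (t + 1) + 1 = N - t := by omega
        have h1 : F (N - (t + 1)) + d (N - (t + 1)) = F (N - t) := by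
          simp [hd, hNt]
        have h2 : d (N - (t + 1)) ≤ d N := hdmono _ _ (Nat.sub_le _ _)
        push_cast
        linarith
    have hm : N - (N - m) = m := by omega
    have := key (N - m) (Nat.sub_le _ _)
    rw [hm] at this
    have hc : ((N - m : ℕ) : ℝ) = (N : ℝ) - m := by
      rw [Nat.cast_sub h.le]
    rw [hc] at this
    linarith


/-- For any distribution `p` with mean `na > 0` and `1 ≤ n ≤ ⌊na⌋`, the n-th order
correlation `g⁽ⁿ⁾ = (∑ m!/(m-n)! p m)/naⁿ` (falling factorial, zero for m < n)
satisfies the Fock-duo bound, which is attained by the Fock duo of mean `na`. -/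
theorem stmt5 (p : ℕ → ℝ) (hp : ∀ m, 0 ≤ p m)
    (hsum1 : ∑' m : ℕ, p m = 1)
    (n : ℕ) (hn : 1 ≤ n)
    (hmom : Summable fun m : ℕ => (m : ℝ) ^ n * p m)
    (na : ℝ) (hna : na = ∑' m : ℕ, (m : ℝ) * p m) (hpos : 0 < na)
    (N : ℕ) (hN : N = (⌊na⌋).toNat) (hnN : n ≤ N) :
    ((∑' m : ℕ, (∏ i ∈ Finset.range n, ((m : ℝ) - i)) * p m) / na ^ n ≥
      ((N.factorial : ℝ) / ((N - n).factorial : ℝ)) / na ^ n *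
        (1 + (n : ℝ) * (na - (N : ℝ)) / ((N : ℝ) + 1 - (n : ℝ)))) ∧
    (∀ q : ℕ → ℝ,
      (q = fun m => if m = N then (N : ℝ) + 1 - na
        else if m = N + 1 then na - (N : ℝ) else 0) →
      (∑' m : ℕ, (∏ i ∈ Finset.range n, ((m : ℝ) - i)) * q m) / na ^ n =
        ((N.factorial : ℝ) / ((N - n).factorial : ℝ)) / na ^ n *
          (1 + (n : ℝ) * (na - (N : ℝ)) / ((N : ℝ) + 1 - (n : ℝ)))) := by
  have hprodrw : ∀ (r : ℕ → ℝ), (∑' m : ℕ, (∏ i ∈ Finset.range n, ((m : ℝ) - i)) * r m)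
      = ∑' m : ℕ, (m.descFactorial n : ℝ) * r m := by
    intro r; congr 1; funext m; rw [prod_range_sub_eq_descFactorial]
  have hnN' : (n : ℝ) ≤ (N : ℝ) := by exact_mod_cast hnN
  have hE : (0 : ℝ) < (N : ℝ) + 1 - (n : ℝ) := by linarith
  have hpow : (0 : ℝ) < na ^ n := pow_pos hpos n
  set FN : ℝ := (N.descFactorial n : ℝ) with hFN
  set FN1 : ℝ := ((N + 1).descFactorial n : ℝ) with hFN1
  set D : ℝ := FN1 - FN with hD
  -- the factorial form of FN
  have hfacne : ((N - n).factorial : ℝ) ≠ 0 := by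
    exact_mod_cast (Nat.factorial_pos (N - n)).ne'
  have hfac : (N.factorial : ℝ) / ((N - n).factorial : ℝ) = FN := by
    have h := Nat.factorial_mul_descFactorial hnN
    have hcast : ((N - n).factorial : ℝ) * FN = (N.factorial : ℝ) := by
      rw [hFN]; exact_mod_cast h
    rw [div_eq_iff hfacne, ← hcast]; ring
  -- key algebraic identity
  have hkey : FN + (na - (N : ℝ)) * D =
      (N.factorial : ℝ) / ((N - n).factorial : ℝ) *
        (1 + (n : ℝ) * (na - (N : ℝ)) / ((N : ℝ) + 1 - (n : ℝ))) := by
    have hC : FN = ((N : ℝ) + 1 - (n : ℝ)) * (N.descFactorial (n - 1) : ℝ) := by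
      obtain ⟨j, rfl⟩ : ∃ j, n = j + 1 := ⟨n - 1, (Nat.succ_pred_eq_of_pos hn).symm⟩
      rw [hFN, Nat.descFactorial_succ]
      have hj : j ≤ N := by omega
      push_cast [Nat.cast_sub hj]
      ring
    have hDval : D = (n : ℝ) * (N.descFactorial (n - 1) : ℝ) := by
      rw [hD, hFN1, hFN]; exact descFactorial_diff n N hn
    rw [hfac, hDval, hC]
    field_simp
  -- summability facts
  have hP : Summable p := by
    by_contra h
    rw [tsum_eq_zero_of_not_summable h] at hsum1
    norm_num at hsum1
  have hM : Summable (fun m : ℕ => (m : ℝ) * p m) := by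
    apply Summable.of_nonneg_of_le (fun m => mul_nonneg (by positivity) (hp m)) _ hmom
    intro m
    apply mul_le_mul_of_nonneg_right _ (hp m)
    rcases Nat.eq_zero_or_pos m with rfl | hm
    · simp
    · exact le_self_pow₀ (by exact_mod_cast hm) (by omega)
  have hSf : Summable (fun m : ℕ => (m.descFactorial n : ℝ) * p m) := by
    apply Summable.of_nonneg_of_le (fun m => mul_nonneg (by positivity) (hp m)) _ hmom
    intro m
    apply mul_le_mul_of_nonneg_right _ (hp m)
    exact_mod_cast Nat.descFactorial_le_pow m n
  -- the main inequality on tsums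
  have hineq : FN + (na - (N : ℝ)) * D ≤ ∑' m : ℕ, (m.descFactorial n : ℝ) * p m := by
    have hts : ∑' m : ℕ, ((FN - (N : ℝ) * D) * p m + D * ((m : ℝ) * p m))
        = FN + (na - (N : ℝ)) * D := by
      rw [Summable.tsum_add (hP.mul_left _) (hM.mul_left _), tsum_mul_left, tsum_mul_left,
        hsum1, ← hna]
      ring
    rw [← hts]
    apply Summable.tsum_le_tsum _ ((hP.mul_left _).add (hM.mul_left _)) hSf
    intro m
    have hline := descFactorial_line_le n N hn m
    rw [← hFN, ← hFN1, ← hD] at hline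
    calc (FN - (N : ℝ) * D) * p m + D * ((m : ℝ) * p m)
        = (FN + ((m : ℝ) - (N : ℝ)) * D) * p m := by ring
      _ ≤ (m.descFactorial n : ℝ) * p m := mul_le_mul_of_nonneg_right hline (hp m)
  constructor
  · rw [hprodrw, ge_iff_le, div_mul_eq_mul_div]
    apply div_le_div_of_nonneg_right _ hpow.le
    rw [← hkey]
    exact hineq
  · intro q hq
    subst hq
    rw [hprodrw]
    have htsum : ∑' m : ℕ, (m.descFactorial n : ℝ) *
        (if m = N then (N : ℝ) + 1 - na else if m = N + 1 then na - (N : ℝ) else 0)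
        = FN * ((N : ℝ) + 1 - na) + FN1 * (na - (N : ℝ)) := by
      rw [tsum_eq_sum (s := {N, N + 1}) (by
        intro b hb
        simp only [Finset.mem_insert, Finset.mem_singleton, not_or] at hb
        rw [if_neg hb.1, if_neg hb.2, mul_zero])]
      rw [Finset.sum_pair (by omega : N ≠ N + 1)]
      rw [if_pos rfl, if_neg (by omega : N + 1 ≠ N), if_pos rfl, ← hFN, ← hFN1]
    rw [htsum, div_mul_eq_mul_div, ← hkey]
    congr 1
    rw [hD]
    ring
end

section
/- For 0 < n_a < 1 and any g^(2) > 0, there exists a probability distribution on {0, 1, k} for sufficiently large integer k, with p(0) = (g^(2)·n_a² + k(1-n_a))/k, p(1) = (k(1-p(0)) - n_a)/(k-1), and remaining weight on k, having mean n_a and second-order correlation exactly g^(2). -/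
/-- For 0 < na < 1 and any g² > 0, there is a distribution on {0, 1, k} for a
sufficiently large integer k, with the explicit weights
p0 = (g²na² + k(1-na))/k, p1 = (k(1-p0)-na)/(k-1) and 1-p0-p1 on k, having mean
na and second-order correlation exactly g². -/
theorem stmt8 (na g2 : ℝ) (hna0 : 0 < na) (hna1 : na < 1) (hg2 : 0 < g2) :
    ∃ (k : ℕ) (p : ℕ → ℝ), 1 < k ∧
      (p = fun m =>
        if m = 0 then (g2 * na ^ 2 + (k : ℝ) * (1 - na)) / (k : ℝ)
        else if m = 1 then
          ((k : ℝ) * (1 - (g2 * na ^ 2 + (k : ℝ) * (1 - na)) / (k : ℝ)) - na) / ((k : ℝ) - 1)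
        else if m = k then
          1 - (g2 * na ^ 2 + (k : ℝ) * (1 - na)) / (k : ℝ)
            - ((k : ℝ) * (1 - (g2 * na ^ 2 + (k : ℝ) * (1 - na)) / (k : ℝ)) - na) / ((k : ℝ) - 1)
        else 0) ∧
      (∀ m, 0 ≤ p m) ∧
      (∑' m : ℕ, p m = 1) ∧
      (∑' m : ℕ, (m : ℝ) * p m = na) ∧
      (∑' m : ℕ, (m : ℝ) * ((m : ℝ) - 1) * p m) / na ^ 2 = g2 := by
  set k : ℕ := ⌈g2 * na⌉₊ + 2 with hkdef
  have hk1 : 1 < k := by omega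
  have hkR1 : (1 : ℝ) < (k : ℝ) := by exact_mod_cast hk1
  have hk0 : (k : ℝ) ≠ 0 := by positivity
  have hkm1 : (0 : ℝ) < (k : ℝ) - 1 := by linarith
  have hkm1' : (k : ℝ) - 1 ≠ 0 := ne_of_gt hkm1
  have hge : g2 * na ≤ (k : ℝ) - 1 := by
    have h1 := Nat.le_ceil (g2 * na)
    have h2 : (⌈g2 * na⌉₊ : ℝ) ≤ (k : ℝ) - 1 := by
      rw [hkdef]; push_cast; linarith
    linarith
  have hk0n : k ≠ 0 := by omega
  have hk1n : k ≠ 1 := by omega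
  have key : ∀ f : ℕ → ℝ, (∀ m, m ≠ 0 → m ≠ 1 → m ≠ k → f m = 0) →
      ∑' m : ℕ, f m = f 0 + f 1 + f k := by
    intro f hf
    rw [tsum_eq_sum (s := ({0, 1, k} : Finset ℕ)) (by
      intro b hb
      simp only [Finset.mem_insert, Finset.mem_singleton, not_or] at hb
      exact hf b hb.1 hb.2.1 hb.2.2)]
    rw [show ({0, 1, k} : Finset ℕ) = insert 0 (insert 1 {k}) from rfl,
      Finset.sum_insert (by simp [Ne.symm hk0n]),
      Finset.sum_insert (by simp [Ne.symm hk1n]), Finset.sum_singleton]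
    ring
  refine ⟨k, _, hk1, rfl, ?_, ?_, ?_, ?_⟩
  · -- nonnegativity
    intro m
    by_cases h0 : m = 0
    · simp only [h0, if_pos rfl]
      have h1 : (0:ℝ) ≤ g2 * na ^ 2 := by positivity
      have h2 : (0:ℝ) ≤ (k : ℝ) * (1 - na) := by
        apply mul_nonneg (by positivity); linarith
      have : (0:ℝ) ≤ g2 * na ^ 2 + (k : ℝ) * (1 - na) := by linarith
      exact div_nonneg this (by positivity)
    · by_cases h1 : m = 1
      · simp only [h1, if_neg (by norm_num : (1:ℕ) ≠ 0), if_pos rfl]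
        have hnum : (k : ℝ) * (1 - (g2 * na ^ 2 + (k : ℝ) * (1 - na)) / (k : ℝ)) - na
            = na * (((k : ℝ) - 1) - g2 * na) := by field_simp; ring
        rw [hnum]
        have h2 : 0 ≤ ((k : ℝ) - 1) - g2 * na := by linarith
        exact div_nonneg (mul_nonneg hna0.le h2) hkm1.le
      · by_cases hk : m = k
        · simp only [hk, if_neg hk0n, if_neg hk1n, if_pos rfl]
          have heq : 1 - (g2 * na ^ 2 + (k : ℝ) * (1 - na)) / (k : ℝ)
              - ((k : ℝ) * (1 - (g2 * na ^ 2 + (k : ℝ) * (1 - na)) / (k : ℝ)) - na) / ((k : ℝ) - 1)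
              = g2 * na ^ 2 / ((k : ℝ) * ((k : ℝ) - 1)) := by
            field_simp; ring
          rw [heq]; positivity
        · simp [h0, h1, hk]
  · rw [key _ (by intro m h0 h1 hk; simp [h0, h1, hk])]
    simp only [if_pos rfl, if_neg hk0n, if_neg hk1n,
      if_neg (by norm_num : (1:ℕ) ≠ 0)]
    norm_num
  · rw [key _ (by intro m h0 h1 hk; simp [h0, h1, hk])]
    simp only [if_pos rfl, if_neg hk0n, if_neg hk1n,
      if_neg (by norm_num : (1:ℕ) ≠ 0)]
    push_cast
    field_simp
    ring
  · rw [key _ (by intro m h0 h1 hk; simp [h0, h1, hk])]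
    simp only [if_pos rfl, if_neg hk0n, if_neg hk1n,
      if_neg (by norm_num : (1:ℕ) ≠ 0)]
    push_cast
    field_simp
    ring
end

section
/- For the incoherent-SPS formulas n_a(P) = 4Pγσ/((γσ+P)(γσ+P+γa)) and g^(2)(P) = 2(γσ+P)/(γσ+P+3γa), the population n_a(P) attains its maximum over P > 0 at P = √(γσ(γa+γσ)), with maximal value 4(2 + γa/γσ - 2√(1+γa/γσ))/(γa/γσ)², at which point g^(2) = 2/(3√(1+γa/γσ) - 2). -/
/-- The incoherent-SPS population na(P) is maximized over P > 0 at
P = √(γσ(γa+γσ)), with the stated maximal value and g² there. -/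
theorem stmt10 (γσ γa : ℝ) (hσ : 0 < γσ) (ha : 0 < γa)
    (na g2 : ℝ → ℝ)
    (hna : na = fun P => 4 * P * γσ / ((γσ + P) * (γσ + P + γa)))
    (hg2 : g2 = fun P => 2 * (γσ + P) / (γσ + P + 3 * γa)) :
    (∀ P, 0 < P → na P ≤ na (Real.sqrt (γσ * (γa + γσ)))) ∧
    na (Real.sqrt (γσ * (γa + γσ))) =
      4 * (2 + γa / γσ - 2 * Real.sqrt (1 + γa / γσ)) / (γa / γσ) ^ 2 ∧
    g2 (Real.sqrt (γσ * (γa + γσ))) = 2 / (3 * Real.sqrt (1 + γa / γσ) - 2) := by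
  set t := Real.sqrt (γσ * (γa + γσ)) with htdef
  have hpos : (0:ℝ) < γσ * (γa + γσ) := by positivity
  have ht2 : t ^ 2 = γσ * (γa + γσ) := Real.sq_sqrt hpos.le
  have ht : 0 < t := Real.sqrt_pos.mpr hpos
  have htγ : γσ < t := by nlinarith
  have hsq : Real.sqrt (1 + γa / γσ) = t / γσ := by
    rw [show 1 + γa / γσ = (t / γσ) ^ 2 by field_simp; nlinarith]
    exact Real.sqrt_sq (by positivity)
  subst hna hg2
  refine ⟨fun P hP => ?_, ?_, ?_⟩
  · simp only
    rw [div_le_div_iff₀ (by nlinarith) (by nlinarith)]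
    have key : 4 * t * γσ * ((γσ + P) * (γσ + P + γa))
        - 4 * P * γσ * ((γσ + t) * (γσ + t + γa)) = 4 * γσ * t * (t - P) ^ 2 := by
      linear_combination (4 * γσ * (P - t)) * ht2
    nlinarith [sq_nonneg (t - P), mul_nonneg (mul_nonneg hσ.le ht.le) (sq_nonneg (t - P))]
  · simp only [hsq]
    rw [div_eq_div_iff (by nlinarith) (by positivity)]
    field_simp
    linear_combination (2 * t + γa + 2 * γσ) * ht2
  · simp only [hsq]
    have h3 : (0:ℝ) < 3 * (t / γσ) - 2 := by
      have h1 : 1 < t / γσ := (one_lt_div hσ).mpr htγ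
      linarith
    rw [div_eq_div_iff (by nlinarith) h3.ne']
    field_simp
    linear_combination 3 * ht2
end

section
/- The envelope of all incoherent-SPS trajectories in the (n_a, g^(2)) plane is g^(2) = 2n_a/(3 - 2n_a): for every γa/γσ > 0 and P > 0, the point (n_a(P), g^(2)(P)) with n_a = 4Pγσ/((γσ+P)(γσ+P+γa)) and g^(2) = 2(γσ+P)/(γσ+P+3γa) satisfies g^(2) ≥ 2n_a/(3-2n_a). -/
/-- Every point on an incoherent-SPS trajectory lies above the envelope
g² = 2na/(3-2na). -/
theorem stmt12 (P γσ γa : ℝ) (hP : 0 < P) (hσ : 0 < γσ) (ha : 0 < γa)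
    (na g2 : ℝ)
    (hna : na = 4 * P * γσ / ((γσ + P) * (γσ + P + γa)))
    (hg2 : g2 = 2 * (γσ + P) / (γσ + P + 3 * γa)) :
    na < 3 / 2 ∧ 2 * na / (3 - 2 * na) ≤ g2 := by
  have hD : 0 < (γσ + P) * (γσ + P + γa) := by positivity
  have hsq : (P - γσ)^2 ≥ 0 := sq_nonneg _
  have hna' : na < 3 / 2 := by
    rw [hna, div_lt_iff₀ hD]; nlinarith
  refine ⟨hna', ?_⟩
  have h3 : 0 < 3 - 2 * na := by linarith
  have hden : 0 < γσ + P + 3 * γa := by linarith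
  rw [hg2, div_le_div_iff₀ h3 hden]
  have hnaD : na * ((γσ + P) * (γσ + P + γa)) = 4 * P * γσ := by
    rw [hna]; field_simp
  nlinarith [mul_nonneg (mul_nonneg hsq (by positivity : (0:ℝ) ≤ γσ + P + γa)) ha.le,
    mul_nonneg hsq (by positivity : (0:ℝ) ≤ γσ + P), hD, sq_nonneg (γσ+P)]
end

section
/- The function g^(2)_*(n_a) = ⌊n_a⌋(2n_a - ⌊n_a⌋ - 1)/n_a² defining the Fock-duo boundary is continuous on (0,∞) and non-decreasing in n_a, with g^(2)_*(n_a) = 0 for 0 < n_a ≤ 1 and g^(2)_*(n_a) → 1 as n_a → ∞. -/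
open Set Filter

private lemma Fmono (n : ℤ) (a b : ℝ) (hn : 0 ≤ (n:ℝ)) (ha : 0 < a) (hab : a ≤ b)
    (hb : b ≤ (n:ℝ) + 1) :
    (n:ℝ) * (2*a - n - 1) / a^2 ≤ (n:ℝ) * (2*b - n - 1) / b^2 := by
  have hb0 : 0 < b := lt_of_lt_of_le ha hab
  rw [div_le_div_iff₀ (by positivity) (by positivity)]
  nlinarith [mul_nonneg (mul_nonneg hn (sub_nonneg.2 hab)) (sub_nonneg.2 hab),
    mul_nonneg (mul_nonneg hn (sub_nonneg.2 hab)) (sub_nonneg.2 (le_trans hab hb)),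
    mul_nonneg (mul_nonneg hn (sub_nonneg.2 hab)) (sub_nonneg.2 hb),
    mul_pos ha hb0]

/-- The Fock-duo boundary g²*(na) = ⌊na⌋(2na-⌊na⌋-1)/na² is continuous and
non-decreasing on (0,∞), vanishes for 0 < na ≤ 1, and tends to 1 as na → ∞. -/
theorem stmt17 (f : ℝ → ℝ)
    (hf : f = fun na => (⌊na⌋ : ℝ) * (2 * na - (⌊na⌋ : ℝ) - 1) / na ^ 2) :
    ContinuousOn f (Set.Ioi 0) ∧
    MonotoneOn f (Set.Ioi 0) ∧
    (∀ na : ℝ, 0 < na → na ≤ 1 → f na = 0) ∧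
    Filter.Tendsto f Filter.atTop (nhds 1) := by
  -- key rewriting of f using fract
  have hfx : ∀ x : ℝ, x ≠ 0 → f x =
      (x^2 - (x - Int.fract x * (1 - Int.fract x))) / x^2 := by
    intro x hx
    rw [hf]
    simp only
    congr 1
    rw [Int.fract]
    ring
  refine ⟨?_, ?_, ?_, ?_⟩
  · -- continuity
    have h1 : Continuous ((fun t : ℝ => t * (1 - t)) ∘ Int.fract) :=
      ContinuousOn.comp_fract'' ((continuous_id.mul (continuous_const.sub continuous_id)).continuousOn) (by norm_num)
    have h2 : ContinuousOn (fun x : ℝ =>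
        (x^2 - (x - Int.fract x * (1 - Int.fract x))) / x^2) (Ioi 0) := by
      apply ContinuousOn.div
      · exact (continuousOn_pow 2).sub (continuousOn_id.sub h1.continuousOn)
      · exact continuousOn_pow 2
      · intro x hx; exact (pow_pos (Set.mem_Ioi.mp hx) 2).ne'
    exact h2.congr fun x hx => hfx x (ne_of_gt hx)
  · -- monotone
    intro x hx y hy hxy
    simp only [mem_Ioi] at hx hy
    have hm0 : 0 ≤ ⌊x⌋ := Int.floor_nonneg.2 hx.le
    have hM0 : 0 ≤ ⌊y⌋ := Int.floor_nonneg.2 hy.le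
    have hmM : ⌊x⌋ ≤ ⌊y⌋ := Int.floor_le_floor hxy
    rcases eq_or_lt_of_le hmM with h | h
    · -- same floor
      rw [hf]; simp only [← h]
      exact Fmono ⌊x⌋ x y (by exact_mod_cast hm0) hx hxy
        (by rw [h]; exact (Int.lt_floor_add_one y).le)
    · -- ⌊x⌋ < ⌊y⌋, so ⌊y⌋ ≥ 1 and ⌊x⌋+1 ≤ ⌊y⌋
      have hM1 : 1 ≤ ⌊y⌋ := by omega
      have hstep : ⌊x⌋ + 1 ≤ ⌊y⌋ := h
      have hMy : (⌊y⌋:ℝ) ≤ y := Int.floor_le y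
      have hMpos : (0:ℝ) < ⌊y⌋ := by exact_mod_cast hM1
      -- f x ≤ m/(m+1)
      have h1 : f x ≤ (⌊x⌋:ℝ) / (⌊x⌋ + 1) := by
        have := Fmono ⌊x⌋ x ((⌊x⌋:ℝ)+1) (by exact_mod_cast hm0) hx
          (Int.lt_floor_add_one x).le le_rfl
        rw [hf]; simp only
        refine this.trans (le_of_eq ?_)
        have : (0:ℝ) < (⌊x⌋:ℝ) + 1 := by positivity
        field_simp
        ring
      -- m/(m+1) ≤ (M-1)/M
      have h2 : (⌊x⌋:ℝ) / (⌊x⌋ + 1) ≤ ((⌊y⌋:ℝ) - 1) / ⌊y⌋ := by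
        rw [div_le_div_iff₀ (by positivity) hMpos]
        have : (⌊x⌋:ℝ) + 1 ≤ (⌊y⌋:ℝ) := by exact_mod_cast hstep
        nlinarith
      -- (M-1)/M ≤ f y
      have h3 : ((⌊y⌋:ℝ) - 1) / ⌊y⌋ ≤ f y := by
        have := Fmono ⌊y⌋ ((⌊y⌋:ℝ)) y (by exact_mod_cast hM0) hMpos hMy
          (Int.lt_floor_add_one y).le
        rw [hf]; simp only
        refine le_trans (le_of_eq ?_) this
        field_simp
        ring
      exact h1.trans (h2.trans h3)
  · -- zero on (0,1]
    intro na h0 h1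
    rcases eq_or_lt_of_le h1 with h | h
    · subst h; norm_num [hf]
    · have : ⌊na⌋ = 0 := Int.floor_eq_zero_iff.2 ⟨h0.le, h⟩
      simp [hf, this]
  · -- limit
    have hlo : ∀ᶠ x : ℝ in atTop, 1 - 1/x ≤ f x := by
      filter_upwards [eventually_ge_atTop (1:ℝ)] with x hx1
      have hx0 : (0:ℝ) < x := lt_of_lt_of_le one_pos hx1
      rw [hf]; simp only
      rw [le_div_iff₀ (by positivity)]
      have hfl : (⌊x⌋:ℝ) ≤ x := Int.floor_le x
      have hfl2 : x < (⌊x⌋:ℝ) + 1 := Int.lt_floor_add_one x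
      have hq : (1 - 1/x) * x^2 = x^2 - x := by field_simp
      rw [hq]
      nlinarith [mul_nonneg (sub_nonneg.2 hfl) (sub_nonneg.2 hfl2.le)]
    have hhi : ∀ᶠ x : ℝ in atTop, f x ≤ 1 := by
      filter_upwards [eventually_ge_atTop (1:ℝ)] with x hx1
      have hx0 : (0:ℝ) < x := lt_of_lt_of_le one_pos hx1
      rw [hf]; simp only
      rw [div_le_one (by positivity)]
      have hfl : (⌊x⌋:ℝ) ≤ x := Int.floor_le x
      have hfln : (0:ℝ) ≤ ⌊x⌋ := by
        exact_mod_cast Int.floor_nonneg.2 hx0.le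
      nlinarith [sq_nonneg (x - ⌊x⌋)]
    have hl : Tendsto (fun x : ℝ => 1 - 1/x) atTop (nhds 1) := by
      simpa [one_div] using (tendsto_const_nhds (x := (1:ℝ)) (f := atTop)).sub tendsto_inv_atTop_zero
    exact tendsto_of_tendsto_of_tendsto_of_le_of_le' hl tendsto_const_nhds hlo hhi
end
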